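/- For every real p ≥ 2 there exists a constant C_p > 0, depending only on p, such that the following pointwise inequality holds. Let N ≥ 1, let x₀ ∈ ℝ^N, and let u, v be positive real-valued functions differentiable at x₀. Writing all quantities at the point x₀, with ∇ denoting the gradient, one has: |∇u|^{p-2} ⟨∇u, ∇(u - v^p u^{1-p})⟩ + |∇v|^{p-2} ⟨∇v, ∇(v - u^p v^{1-p})⟩ ≥ C_p · min{u^p, v^p} · (|∇u/u| + |∇v/v|)^{p-2} · |∇u/u - ∇v/v|². -/

import Mathlib

open Real RealInnerProductSpace InnerProductSpace

lemma rpow_psub2_mul_sq {x : ℝ} (hx : 0 ≤ x) {p : ℝ} (hp : 2 ≤ p) :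
    x ^ (p - 2) * x ^ (2:ℕ) = x ^ p := by
  rcases hx.eq_or_lt with h | h
  · simp [← h, Real.zero_rpow (show p ≠ 0 by linarith)]
  · rw [← Real.rpow_natCast x 2, ← Real.rpow_add h]
    norm_num

lemma rpow_psub2_mul_self {x : ℝ} (hx : 0 ≤ x) {p : ℝ} (hp : 2 ≤ p) :
    x ^ (p - 2) * x = x ^ (p - 1) := by
  rcases hx.eq_or_lt with h | h
  · simp [← h, Real.zero_rpow (show p - 1 ≠ 0 by intro h; linarith)]
  · calc x ^ (p-2) * x = x ^ (p-2) * x ^ (1:ℝ) := by rw [Real.rpow_one]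
      _ = x ^ (p-2+1) := (Real.rpow_add h _ _).symm
      _ = x ^ (p-1) := by ring_nf

lemma young' {p : ℝ} (hp : 2 ≤ p) {s t : ℝ} (hs : 0 ≤ s) (ht : 0 ≤ t) :
    p * (t ^ (p-1) * s) ≤ s ^ p + (p-1) * t ^ p := by
  have hpq := Real.HolderConjugate.conjExponent (show 1 < p by linarith)
  have hy := Real.young_inequality_of_nonneg hs (Real.rpow_nonneg ht (p-1)) hpq
  have hq : (t ^ (p-1)) ^ (Real.conjExponent p) = t ^ p := by
    rw [← Real.rpow_mul ht, hpq.sub_one_mul_conj]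
  rw [hq] at hy
  have hq' : p / Real.conjExponent p = p - 1 := hpq.div_conj_eq_sub_one
  have hq0 : (0:ℝ) < Real.conjExponent p := hpq.symm.pos
  have hp0 : (0:ℝ) < p := by linarith
  have key := mul_le_mul_of_nonneg_left hy hp0.le
  have e : p * (s ^ p / p + t ^ p / Real.conjExponent p) = s ^ p + (p-1) * t ^ p := by
    have e2 : p * (t ^ p / Real.conjExponent p) = (p / Real.conjExponent p) * t ^ p := by
      field_simp
    rw [mul_add, mul_comm, div_mul_cancel₀ _ hp0.ne', e2, hq']
  rw [e] at key
  calc p * (t ^ (p-1) * s) = p * (s * t ^ (p-1)) := by ring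
    _ ≤ _ := key

lemma F_nonneg {p : ℝ} (hp : 2 ≤ p) {s t ip : ℝ} (hs : 0 ≤ s) (ht : 0 ≤ t)
    (hip : ip ≤ s * t) :
    0 ≤ s ^ p + (p-1) * t ^ p - p * (t ^ (p-2) * ip) := by
  have h1 : t ^ (p-2) * ip ≤ t ^ (p-2) * (s * t) :=
    mul_le_mul_of_nonneg_left hip (Real.rpow_nonneg ht _)
  have h2 : t ^ (p-2) * (s * t) = t ^ (p-1) * s := by
    rw [← rpow_psub2_mul_self ht hp]; ring
  have h3 := young' hp hs ht
  have h4 : p * (t ^ (p-2) * ip) ≤ p * (t ^ (p-1) * s) := by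
    apply mul_le_mul_of_nonneg_left _ (by linarith : (0:ℝ) ≤ p)
    rw [← h2]; exact h1
  linarith

lemma sym_bound {p : ℝ} (hp : 2 ≤ p) {s t ip d : ℝ} (hs : 0 ≤ s) (ht : 0 ≤ t)
    (hd : d ^ (2:ℕ) = s ^ (2:ℕ) - 2 * ip + t ^ (2:ℕ)) :
    (2:ℝ) ^ (2-p) * ((s+t) ^ (p-2) * d ^ (2:ℕ))
      ≤ p * (s ^ p + t ^ p) - p * ((s ^ (p-2) + t ^ (p-2)) * ip) := by
  have g1 := rpow_psub2_mul_sq hs hp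
  have g2 := rpow_psub2_mul_sq ht hp
  have hmono : 0 ≤ (s ^ (p-2) - t ^ (p-2)) * (s ^ (2:ℕ) - t ^ (2:ℕ)) := by
    rcases le_total s t with h | h
    · have h1 : s ^ (p-2) ≤ t ^ (p-2) := Real.rpow_le_rpow hs h (by linarith)
      have h2 : s ^ (2:ℕ) ≤ t ^ (2:ℕ) := pow_le_pow_left₀ hs h 2
      nlinarith
    · apply mul_nonneg
      · simp only [sub_nonneg]; exact Real.rpow_le_rpow ht h (by linarith)
      · simp only [sub_nonneg]; exact pow_le_pow_left₀ ht h 2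
  have key : p * (s ^ p + t ^ p) - p * ((s ^ (p-2) + t ^ (p-2)) * ip)
      - (p/2) * ((s ^ (p-2) + t ^ (p-2)) * d ^ (2:ℕ))
      = (p/2) * ((s ^ (p-2) - t ^ (p-2)) * (s ^ (2:ℕ) - t ^ (2:ℕ))) := by
    rw [hd, ← g1, ← g2]; ring
  have hhalf : (p/2) * ((s ^ (p-2) + t ^ (p-2)) * d ^ (2:ℕ))
      ≤ p * (s ^ p + t ^ p) - p * ((s ^ (p-2) + t ^ (p-2)) * ip) := by
    nlinarith [mul_nonneg (show (0:ℝ) ≤ p/2 by linarith) hmono]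
  have hXY : 0 ≤ s ^ (p-2) + t ^ (p-2) :=
    add_nonneg (Real.rpow_nonneg hs _) (Real.rpow_nonneg ht _)
  have c1 : (s+t) ^ (p-2) ≤ (2:ℝ) ^ (p-2) * (s ^ (p-2) + t ^ (p-2)) := by
    rcases le_total s t with h | h
    · calc (s+t) ^ (p-2) ≤ (2*t) ^ (p-2) :=
            Real.rpow_le_rpow (by linarith) (by linarith) (by linarith)
        _ = (2:ℝ) ^ (p-2) * t ^ (p-2) := Real.mul_rpow (by norm_num) ht
        _ ≤ _ := by
            have := Real.rpow_nonneg hs (p-2)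
            have h2 : (0:ℝ) ≤ (2:ℝ) ^ (p-2) := Real.rpow_nonneg (by norm_num) _
            nlinarith
    · calc (s+t) ^ (p-2) ≤ (2*s) ^ (p-2) :=
            Real.rpow_le_rpow (by linarith) (by linarith) (by linarith)
        _ = (2:ℝ) ^ (p-2) * s ^ (p-2) := Real.mul_rpow (by norm_num) hs
        _ ≤ _ := by
            have := Real.rpow_nonneg ht (p-2)
            have h2 : (0:ℝ) ≤ (2:ℝ) ^ (p-2) := Real.rpow_nonneg (by norm_num) _
            nlinarith
  have c2 : (2:ℝ) ^ (2-p) * (2:ℝ) ^ (p-2) = 1 := by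
    rw [← Real.rpow_add two_pos]; norm_num
  have h2p : (0:ℝ) < (2:ℝ) ^ (2-p) := Real.rpow_pos_of_pos two_pos _
  have hC : (2:ℝ) ^ (2-p) * (s+t) ^ (p-2) ≤ (p/2) * (s ^ (p-2) + t ^ (p-2)) :=
    calc (2:ℝ) ^ (2-p) * (s+t) ^ (p-2)
        ≤ (2:ℝ) ^ (2-p) * ((2:ℝ) ^ (p-2) * (s ^ (p-2) + t ^ (p-2))) :=
          mul_le_mul_of_nonneg_left c1 h2p.le
      _ = s ^ (p-2) + t ^ (p-2) := by rw [← mul_assoc, c2, one_mul]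
      _ ≤ (p/2) * (s ^ (p-2) + t ^ (p-2)) := le_mul_of_one_le_left hXY (by linarith)
  have hfin := mul_le_mul_of_nonneg_right hC (sq_nonneg d)
  calc (2:ℝ) ^ (2-p) * ((s+t) ^ (p-2) * d ^ (2:ℕ))
      = (2:ℝ) ^ (2-p) * (s+t) ^ (p-2) * d ^ (2:ℕ) := by ring
    _ ≤ (p/2) * (s ^ (p-2) + t ^ (p-2)) * d ^ (2:ℕ) := hfin
    _ = (p/2) * ((s ^ (p-2) + t ^ (p-2)) * d ^ (2:ℕ)) := by ring
    _ ≤ _ := hhalf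

lemma term_eq (p : ℝ) (hp : 2 ≤ p) {U V : ℝ} (hU : 0 < U) (hV : 0 < V)
    {s ip : ℝ} (hs : 0 ≤ s) (hip : s = 0 → ip = 0) :
    (U*s) ^ (p-2) * ((1 - (1-p) * (V ^ p * U ^ (1-p-1))) * (U*s) ^ (2:ℕ)
        - (p * V ^ (p-1) * U ^ (1-p)) * (U * (V * ip)))
      = U ^ p * s ^ p + V ^ p * ((p-1) * s ^ p - p * (s ^ (p-2) * ip)) := by
  rcases hs.eq_or_lt with h | h
  · have h0 : s = 0 := h.symm
    rw [hip h0, h0]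
    simp [Real.zero_rpow (show p ≠ 0 by linarith)]
  · have g1 : s ^ (p-2) * s ^ (2:ℕ) = s ^ p := rpow_psub2_mul_sq h.le hp
    have k1 : U ^ (p-2) * U ^ (2:ℕ) = U ^ p := rpow_psub2_mul_sq hU.le hp
    have k2 : U ^ (p-2) * U ^ (1-p-1) * U ^ (2:ℕ) = 1 := by
      rw [← Real.rpow_natCast U 2, ← Real.rpow_add hU, ← Real.rpow_add hU]
      push_cast
      rw [show p - 2 + (1-p-1) + 2 = 0 by ring, Real.rpow_zero]
    have k3 : U ^ (p-2) * (U ^ (1-p) * U) = 1 := by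
      nth_rewrite 3 [← Real.rpow_one U]
      rw [← Real.rpow_add hU, ← Real.rpow_add hU,
        show p - 2 + (1-p+1) = 0 by ring, Real.rpow_zero]
    have k4 : V ^ (p-1) * V = V ^ p := by
      nth_rewrite 2 [← Real.rpow_one V]
      rw [← Real.rpow_add hV]
      norm_num
    have e0 : (U*s) ^ (p-2) = U ^ (p-2) * s ^ (p-2) := Real.mul_rpow hU.le h.le
    have K1 : (U ^ (p-2) * U ^ (2:ℕ)) * (s ^ (p-2) * s ^ (2:ℕ)) = U ^ p * s ^ p := by
      rw [k1, g1]
    have K2 : (U ^ (p-2) * U ^ (1-p-1) * U ^ (2:ℕ)) * (s ^ (p-2) * s ^ (2:ℕ)) = s ^ p := by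
      rw [k2, one_mul, g1]
    have K3 : (U ^ (p-2) * (U ^ (1-p) * U)) * s ^ (p-2) = s ^ (p-2) := by
      rw [k3, one_mul]
    rw [e0]
    linear_combination K1 + (p-1) * V ^ p * K2 - (p * V ^ (p-1) * V * ip) * K3
      - (p * s ^ (p-2) * ip) * k4

lemma grad_formula {E : Type*} [NormedAddCommGroup E] [InnerProductSpace ℝ E] [CompleteSpace E]
    (p : ℝ) (x₀ : E) (u v : E → ℝ) (hu0 : 0 < u x₀) (hv0 : 0 < v x₀)
    (hu : DifferentiableAt ℝ u x₀) (hv : DifferentiableAt ℝ v x₀) :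
    gradient (fun x => u x - v x ^ p * u x ^ (1 - p)) x₀
      = (1 - (1 - p) * (v x₀ ^ p * u x₀ ^ (1 - p - 1))) • gradient u x₀
        - (p * v x₀ ^ (p - 1) * u x₀ ^ (1 - p)) • gradient v x₀ := by
  have hu' : HasFDerivAt u (toDual ℝ E (gradient u x₀)) x₀ :=
    hu.hasGradientAt.hasFDerivAt
  have hv' : HasFDerivAt v (toDual ℝ E (gradient v x₀)) x₀ :=
    hv.hasGradientAt.hasFDerivAt
  have h1 : HasFDerivAt (fun x => v x ^ p)
      ((p * v x₀ ^ (p-1)) • (toDual ℝ E (gradient v x₀))) x₀ :=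
    hv'.rpow_const (Or.inl hv0.ne')
  have h2 : HasFDerivAt (fun x => u x ^ (1-p))
      (((1-p) * u x₀ ^ (1-p-1)) • (toDual ℝ E (gradient u x₀))) x₀ :=
    hu'.rpow_const (Or.inl hu0.ne')
  have h3 := h1.mul h2
  have h4 := hu'.sub h3
  have h5 : HasGradientAt (fun x => u x - v x ^ p * u x ^ (1 - p)) _ x₀ := h4.hasGradientAt
  rw [h5.gradient]
  simp only [map_sub, map_add, map_smul, LinearIsometryEquiv.symm_apply_apply]
  module

set_option maxHeartbeats 1000000 in
theorem pointwise_log_gradient_inequality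
    (p : ℝ) (hp : 2 ≤ p) :
    ∃ C > (0 : ℝ), ∀ (N : ℕ), 1 ≤ N →
      ∀ (x₀ : EuclideanSpace ℝ (Fin N)) (u v : EuclideanSpace ℝ (Fin N) → ℝ),
      (∀ x, 0 < u x) → (∀ x, 0 < v x) →
      DifferentiableAt ℝ u x₀ → DifferentiableAt ℝ v x₀ →
      C * min (u x₀ ^ p) (v x₀ ^ p) *
          (‖(u x₀)⁻¹ • gradient u x₀‖ + ‖(v x₀)⁻¹ • gradient v x₀‖) ^ (p - 2) *
          ‖(u x₀)⁻¹ • gradient u x₀ - (v x₀)⁻¹ • gradient v x₀‖ ^ 2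
        ≤ ‖gradient u x₀‖ ^ (p - 2) *
            ⟪gradient u x₀, gradient (fun x => u x - v x ^ p * u x ^ (1 - p)) x₀⟫
          + ‖gradient v x₀‖ ^ (p - 2) *
            ⟪gradient v x₀, gradient (fun x => v x - u x ^ p * v x ^ (1 - p)) x₀⟫ := by
  refine ⟨(2:ℝ) ^ (2-p), Real.rpow_pos_of_pos two_pos _, ?_⟩
  intro N _hN x₀ u v hu0 hv0 hu hv
  have hU : 0 < u x₀ := hu0 x₀
  have hV : 0 < v x₀ := hv0 x₀
  rw [grad_formula p x₀ u v hU hV hu hv, grad_formula p x₀ v u hV hU hv hu]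
  set a := gradient u x₀ with ha_def
  set b := gradient v x₀ with hb_def
  set U := u x₀
  set V := v x₀
  set A := U⁻¹ • a with hA_def
  set B := V⁻¹ • b with hB_def
  set s := ‖A‖ with hs_def
  set t := ‖B‖ with ht_def
  set ip := ⟪A, B⟫ with hip_def
  have hs0 : 0 ≤ s := norm_nonneg _
  have ht0 : 0 ≤ t := norm_nonneg _
  have haA : a = U • A := by rw [hA_def, smul_inv_smul₀ hU.ne']
  have hbB : b = V • B := by rw [hB_def, smul_inv_smul₀ hV.ne']
  have hna : ‖a‖ = U * s := by
    rw [haA, norm_smul, Real.norm_eq_abs, abs_of_pos hU, hs_def]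
  have hnb : ‖b‖ = V * t := by
    rw [hbB, norm_smul, Real.norm_eq_abs, abs_of_pos hV, ht_def]
  have hab : ⟪a, b⟫ = U * (V * ip) := by
    rw [haA, hbB, real_inner_smul_left, real_inner_smul_right, hip_def]
  have hba : ⟪b, a⟫ = V * (U * ip) := by
    rw [real_inner_comm, hab]; ring
  have hinner_a : ⟪a, a⟫ = (U * s) ^ (2:ℕ) := by
    rw [real_inner_self_eq_norm_sq, hna]
  have hinner_b : ⟪b, b⟫ = (V * t) ^ (2:ℕ) := by
    rw [real_inner_self_eq_norm_sq, hnb]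
  have hipA : s = 0 → ip = 0 := by
    intro h
    have : A = 0 := norm_eq_zero.mp h
    rw [hip_def, this, inner_zero_left]
  have hipB : t = 0 → ip = 0 := by
    intro h
    have : B = 0 := norm_eq_zero.mp h
    rw [hip_def, this, inner_zero_right]
  have hiple : ip ≤ s * t := real_inner_le_norm A B
  have hd2 : ‖A - B‖ ^ (2:ℕ) = s ^ (2:ℕ) - 2 * ip + t ^ (2:ℕ) := by
    rw [norm_sub_sq_real, hs_def, ht_def, hip_def]
  -- rewrite the inner products
  rw [inner_sub_right, real_inner_smul_right, real_inner_smul_right,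
    inner_sub_right, real_inner_smul_right, real_inner_smul_right,
    hinner_a, hinner_b, hab, hba, hna, hnb]
  have e1 := term_eq p hp hU hV hs0 hipA
  have e2 := term_eq p hp hV hU ht0 hipB
  have goal_eq :
      (U * s) ^ (p-2) * ((1 - (1-p) * (V ^ p * U ^ (1-p-1))) * (U*s) ^ (2:ℕ)
          - (p * V ^ (p-1) * U ^ (1-p)) * (U * (V * ip)))
        + (V * t) ^ (p-2) * ((1 - (1-p) * (U ^ p * V ^ (1-p-1))) * (V*t) ^ (2:ℕ)
          - (p * U ^ (p-1) * V ^ (1-p)) * (V * (U * ip)))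
      = U ^ p * (s ^ p + (p-1) * t ^ p - p * (t ^ (p-2) * ip))
        + V ^ p * (t ^ p + (p-1) * s ^ p - p * (s ^ (p-2) * ip)) := by
    rw [e1, e2]; ring
  have hF1 : 0 ≤ s ^ p + (p-1) * t ^ p - p * (t ^ (p-2) * ip) :=
    F_nonneg hp hs0 ht0 hiple
  have hF2 : 0 ≤ t ^ p + (p-1) * s ^ p - p * (s ^ (p-2) * ip) := by
    have := F_nonneg (s := t) (t := s) (ip := ip) hp ht0 hs0
      (hiple.trans_eq (mul_comm s t))
    linarith
  have hsym := sym_bound hp hs0 ht0 hd2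
  have hminU : min (U ^ p) (V ^ p) ≤ U ^ p := min_le_left _ _
  have hminV : min (U ^ p) (V ^ p) ≤ V ^ p := min_le_right _ _
  have hmin0 : 0 ≤ min (U ^ p) (V ^ p) :=
    le_min (Real.rpow_nonneg hU.le _) (Real.rpow_nonneg hV.le _)
  have h5 := mul_le_mul_of_nonneg_left hsym hmin0
  have h6 := mul_le_mul_of_nonneg_right hminU hF1
  have h7 := mul_le_mul_of_nonneg_right hminV hF2
  have final :
      (2:ℝ) ^ (2-p) * min (U ^ p) (V ^ p) * (s + t) ^ (p-2) * ‖A - B‖ ^ (2:ℕ)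
        ≤ U ^ p * (s ^ p + (p-1) * t ^ p - p * (t ^ (p-2) * ip))
          + V ^ p * (t ^ p + (p-1) * s ^ p - p * (s ^ (p-2) * ip)) := by
    linarith [h5, h6, h7]
  calc (2:ℝ) ^ (2-p) * min (U ^ p) (V ^ p) * (s + t) ^ (p-2) * ‖A - B‖ ^ 2
      ≤ U ^ p * (s ^ p + (p-1) * t ^ p - p * (t ^ (p-2) * ip))
        + V ^ p * (t ^ p + (p-1) * s ^ p - p * (s ^ (p-2) * ip)) := final
    _ = _ := goal_eq.symm
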